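/- For every integer k ≥ 2, every obligatory finite k-uniform hypergraph is k-partite; that is, if F is a finite k-uniform hypergraph such that every k-uniform hypergraph of chromatic number at least ℵ₁ contains a copy of F, then the vertex set of F can be partitioned into k classes so that every edge of F meets each class in exactly one vertex. -/

import Mathlib

open Cardinal

universe u

/-- A colouring `f` of the vertices is proper for the edge set `E` if no edge
is monochromatic. -/
def IsProperColoring {V : Type*} {α : Type*} (E : Set (Set V)) (f : V → α) : Prop :=
  ∀ e ∈ E, ∃ x ∈ e, ∃ y ∈ e, f x ≠ f y

/-- The chromatic number of the hypergraph `(V, E)`. -/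
noncomputable def chromaticNumber (V : Type u) (E : Set (Set V)) : Cardinal.{u} :=
  sInf { κ : Cardinal.{u} | ∃ (α : Type u) (f : V → α), #α = κ ∧ IsProperColoring E f }

/-- A finite `k`-uniform hypergraph `(VF, EF)` is *obligatory* if every `k`-uniform
hypergraph of chromatic number at least `ℵ₁` contains a copy of it. -/
def Obligatory (k : ℕ) {VF : Type} (EF : Set (Set VF)) : Prop :=
  ∀ (V : Type u) (E : Set (Set V)), (∀ e ∈ E, e.ncard = k) →
    Cardinal.aleph 1 ≤ chromaticNumber V E →
    ∃ φ : VF → V, Function.Injective φ ∧ ∀ e ∈ EF, φ '' e ∈ E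

namespace ObligAux

noncomputable def expIter : ℕ → Cardinal.{u} → Cardinal.{u}
  | 0, x => x
  | (n+1), x => 2 ^ expIter n x

lemma expIter_mono (n : ℕ) {x y : Cardinal.{u}} (h : x ≤ y) : expIter n x ≤ expIter n y := by
  induction n with
  | zero => exact h
  | succ n ih => exact Cardinal.power_le_power_left two_ne_zero ih

lemma expIter_le_add (n m : ℕ) (x : Cardinal.{u}) : expIter n x ≤ expIter (n + m) x := by
  induction m with
  | zero => exact le_rfl
  | succ m ih => exact ih.trans (le_of_lt (Cardinal.cantor _))

lemma expIter_succ_eq (n : ℕ) (x : Cardinal.{u}) : expIter (n + 1) x = expIter n (2 ^ x) := by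
  induction n with
  | zero => rfl
  | succ n ih => show (2:Cardinal.{u}) ^ expIter (n+1) x = 2 ^ expIter n (2 ^ x); rw [ih]

def win {V : Type u} [LinearOrder V] (n : ℕ) (a : ℕ → V) (i : ℕ) : Finset V :=
  (Finset.range n).image fun j => a (i + j)

lemma mem_win {V : Type u} [LinearOrder V] {n : ℕ} {a : ℕ → V} {i : ℕ} {x : V} :
    x ∈ win n a i ↔ ∃ j, j < n ∧ a (i + j) = x := by
  simp [win]

/-- the two-window (shift graph) lemma. -/
lemma shift2 (n : ℕ) : ∀ (V α : Type u) [LinearOrder V] (c : Finset V → α), 1 ≤ n →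
    expIter n (#α + ℵ₀) < #V →
    ∃ a : ℕ → V, StrictMonoOn a (Set.Iio (n + 1 : ℕ)) ∧ c (win n a 0) = c (win n a 1) := by
  induction n with
  | zero => intro V α _ c h0; omega
  | succ n ih =>
    intro V α _ c _ hlt
    rcases Nat.eq_zero_or_pos n with rfl | hn
    · -- base case : n = 1
      have hα : #α < #V := by
        refine lt_of_le_of_lt ?_ hlt
        calc #α ≤ #α + ℵ₀ := le_self_add
        _ ≤ 2 ^ (#α + ℵ₀) := (Cardinal.cantor _).le
        _ = expIter 1 (#α + ℵ₀) := rfl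
      have hni : ¬ Function.Injective (fun x : V => c {x}) := by
        intro hinj
        exact absurd (Cardinal.mk_le_of_injective hinj) (not_le.mpr hα)
      rw [Function.not_injective_iff] at hni
      obtain ⟨x, y, hcxy, hne⟩ := hni
      -- wlog x < y
      rcases hne.lt_or_gt with hxy | hxy
      · refine ⟨fun t => if t = 0 then x else y, ?_, ?_⟩
        · intro s hs t ht hst
          simp only [Set.mem_Iio] at hs ht
          have : s = 0 ∧ t = 1 := by omega
          simp [this.1, this.2, hxy]
        · have h0 : win 1 (fun t => if t = 0 then x else y) 0 = {x} := by
            ext z; simp [mem_win, Nat.lt_one_iff, eq_comm]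
          have h1 : win 1 (fun t => if t = 0 then x else y) 1 = {y} := by
            ext z; simp [mem_win, Nat.lt_one_iff, eq_comm]
          rw [h0, h1]; exact hcxy
      · refine ⟨fun t => if t = 0 then y else x, ?_, ?_⟩
        · intro s hs t ht hst
          simp only [Set.mem_Iio] at hs ht
          have : s = 0 ∧ t = 1 := by omega
          simp [this.1, this.2, hxy]
        · have h0 : win 1 (fun t => if t = 0 then y else x) 0 = {y} := by
            ext z; simp [mem_win, Nat.lt_one_iff, eq_comm]
          have h1 : win 1 (fun t => if t = 0 then y else x) 1 = {x} := by
            ext z; simp [mem_win, Nat.lt_one_iff, eq_comm]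
          rw [h0, h1]; exact hcxy.symm
    · -- inductive step
      letI := Classical.decEq V
      set cc : Finset V → Set α := fun A => {γ | ∃ x, (∀ y ∈ A, y < x) ∧ c (insert x A) = γ} with hcc
      have hbound : expIter n (#(Set α) + ℵ₀) < #V := by
        refine lt_of_le_of_lt ?_ hlt
        have h1 : #(Set α) + ℵ₀ ≤ 2 ^ (#α + ℵ₀) := by
          have hinf : ℵ₀ ≤ 2 ^ (#α + ℵ₀) := by
            calc ℵ₀ ≤ #α + ℵ₀ := le_add_self
            _ ≤ 2 ^ (#α + ℵ₀) := (Cardinal.cantor _).le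
          refine Cardinal.add_le_of_le hinf ?_ hinf
          rw [Cardinal.mk_set]
          exact Cardinal.power_le_power_left two_ne_zero le_self_add
        calc expIter n (#(Set α) + ℵ₀) ≤ expIter n (2 ^ (#α + ℵ₀)) := expIter_mono n h1
        _ = expIter (n + 1) (#α + ℵ₀) := (expIter_succ_eq n _).symm
      obtain ⟨a, ha, hc⟩ := ih V (Set α) cc hn hbound
      have hmemwin0 : ∀ y ∈ win n a 0, y < a n := by
        intro y hy
        rw [mem_win] at hy
        obtain ⟨j, hj, rfl⟩ := hy
        exact ha (by simp only [Set.mem_Iio]; omega) (by simp only [Set.mem_Iio]; omega) (by omega)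
      have hγ : c (insert (a n) (win n a 0)) ∈ cc (win n a 0) := ⟨a n, hmemwin0, rfl⟩
      rw [hc] at hγ
      obtain ⟨z, hz, hcz⟩ := hγ
      have hz' : ∀ j, j ≤ n → a j < z := by
        intro j hj
        rcases Nat.eq_zero_or_pos j with rfl | hj1
        · calc a 0 < a 1 := ha (by simp only [Set.mem_Iio]; omega) (by simp only [Set.mem_Iio]; omega) (by omega)
          _ < z := hz _ (mem_win.mpr ⟨0, by omega, by rw [Nat.add_zero]⟩)
        · exact hz _ (mem_win.mpr ⟨j - 1, by omega, by congr 1; omega⟩)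
      set a' : ℕ → V := fun t => if t < n + 1 then a t else z with ha'
      have ha'eq : ∀ t, t ≤ n → a' t = a t := by intro t ht; simp [ha']; omega
      have ha'z : a' (n + 1) = z := by simp [ha']
      have hmono : StrictMonoOn a' (Set.Iio (n + 1 + 1 : ℕ)) := by
        intro s hs t ht hst
        simp only [Set.mem_Iio] at hs ht
        rcases Nat.lt_or_ge t (n+1) with h | h
        · rw [ha'eq s (by omega), ha'eq t (by omega)]
          exact ha (by simp only [Set.mem_Iio]; omega) (by simp only [Set.mem_Iio]; omega) hst
        · have ht1 : t = n + 1 := by omega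
          rw [ht1, ha'z, ha'eq s (by omega)]
          exact hz' s (by omega)
      have hw0 : win (n+1) a' 0 = insert (a n) (win n a 0) := by
        ext x
        simp only [mem_win, Finset.mem_insert, Nat.zero_add]
        constructor
        · rintro ⟨j, hj, rfl⟩
          rcases Nat.lt_or_ge j n with h | h
          · exact Or.inr ⟨j, h, (ha'eq j (by omega)).symm⟩
          · have hjn : j = n := by omega
            subst hjn
            exact Or.inl (ha'eq j le_rfl)
        · rintro (rfl | ⟨j, hj, rfl⟩)
          · exact ⟨n, by omega, ha'eq n le_rfl⟩
          · exact ⟨j, by omega, ha'eq j (by omega)⟩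
      have hw1 : win (n+1) a' 1 = insert z (win n a 1) := by
        ext x
        simp only [mem_win, Finset.mem_insert]
        constructor
        · rintro ⟨j, hj, rfl⟩
          rcases Nat.lt_or_ge j n with h | h
          · exact Or.inr ⟨j, h, (ha'eq (1+j) (by omega)).symm⟩
          · refine Or.inl ?_
            rw [show 1 + j = n + 1 from by omega, ha'z]
        · rintro (rfl | ⟨j, hj, rfl⟩)
          · exact ⟨n, by omega, by rw [show 1 + n = n + 1 from by omega, ha'z]⟩
          · exact ⟨j, by omega, ha'eq (1+j) (by omega)⟩
      refine ⟨a', hmono, ?_⟩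
      rw [hw0, hw1, hcz]


/-- `j+2` consecutive windows of the same colour. -/
lemma shiftk (j : ℕ) : ∀ (n : ℕ) (V α : Type u) [LinearOrder V] (c : Finset V → α), 1 ≤ n →
    expIter (n + j) (#α + ℵ₀) < #V →
    ∃ a : ℕ → V, StrictMonoOn a (Set.Iio (n + j + 1 : ℕ)) ∧
      ∃ γ, ∀ i ≤ j + 1, c (win n a i) = γ := by
  induction j with
  | zero =>
    intro n V α _ c hn hlt
    obtain ⟨a, ha, hc⟩ := shift2 n V α c hn (by simpa using hlt)
    refine ⟨a, by simpa using ha, c (win n a 0), ?_⟩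
    intro i hi
    interval_cases i
    · rfl
    · exact hc.symm
  | succ j ih =>
    intro n V α _ c hn hlt
    classical
    set C : Finset V → α × α := fun s =>
      (c (s.filter (fun x => ∃ y ∈ s, x < y)), c (s.filter (fun x => ∃ y ∈ s, y < x))) with hC
    have hbound : expIter ((n+1) + j) (#(α × α) + ℵ₀) < #V := by
      have h1 : #(α × α) + ℵ₀ ≤ #α + ℵ₀ := by
        have hinf : ℵ₀ ≤ #α + ℵ₀ := le_add_self
        refine Cardinal.add_le_of_le hinf ?_ le_add_self
        have hprod : #(α × α) = #α * #α := by simp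
        rw [hprod]
        calc #α * #α ≤ (#α + ℵ₀) * (#α + ℵ₀) := mul_le_mul' le_self_add le_self_add
        _ = #α + ℵ₀ := Cardinal.mul_eq_self hinf
      calc expIter ((n+1)+j) (#(α × α) + ℵ₀) ≤ expIter ((n+1)+j) (#α + ℵ₀) := expIter_mono _ h1
      _ = expIter (n + (j+1)) (#α + ℵ₀) := by rw [show (n+1)+j = n + (j+1) from by omega]
      _ < #V := hlt
    obtain ⟨a, ha, γ, hγ⟩ := ih (n+1) V (α × α) C (by omega) hbound
    have ha' : StrictMonoOn a (Set.Iio (n + (j+1) + 1 : ℕ)) := by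
      rw [show n + (j+1) + 1 = (n+1) + j + 1 from by omega]; exact ha
    have hdom : ∀ t : ℕ, t ≤ n + j + 1 → t ∈ Set.Iio (n + 1 + j + 1 : ℕ) := by
      intro t ht; simp only [Set.mem_Iio]; omega
    have hltiff : ∀ s t : ℕ, s ≤ n + j + 1 → t ≤ n + j + 1 → (a s < a t ↔ s < t) :=
      fun s t hs ht => ha.lt_iff_lt (hdom s hs) (hdom t ht)
    have hcl1 : ∀ i, i ≤ j + 1 →
        (win (n+1) a i).filter (fun x => ∃ y ∈ win (n+1) a i, x < y) = win n a i := by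
      intro i hi
      ext x
      simp only [Finset.mem_filter, mem_win]
      constructor
      · rintro ⟨⟨j₁, hj₁, rfl⟩, ⟨y, hy, hxy⟩⟩
        obtain ⟨j₂, hj₂, rfl⟩ := hy
        have hj12 : i + j₁ < i + j₂ := by
          rw [← hltiff (i+j₁) (i+j₂) (by omega) (by omega)]
          exact hxy
        exact ⟨j₁, by omega, rfl⟩
      · rintro ⟨j₁, hj₁, rfl⟩
        refine ⟨⟨j₁, by omega, rfl⟩, ⟨a (i + n), ⟨n, by omega, rfl⟩, ?_⟩⟩
        rw [hltiff (i+j₁) (i+n) (by omega) (by omega)]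
        omega
    have hcl2 : ∀ i, i ≤ j + 1 →
        (win (n+1) a i).filter (fun x => ∃ y ∈ win (n+1) a i, y < x) = win n a (i+1) := by
      intro i hi
      ext x
      simp only [Finset.mem_filter, mem_win]
      constructor
      · rintro ⟨⟨j₁, hj₁, rfl⟩, ⟨y, hy, hxy⟩⟩
        obtain ⟨j₂, hj₂, rfl⟩ := hy
        have hj12 : i + j₂ < i + j₁ := by
          rw [← hltiff (i+j₂) (i+j₁) (by omega) (by omega)]
          exact hxy
        exact ⟨j₁ - 1, by omega, by congr 1; omega⟩
      · rintro ⟨j₁, hj₁, rfl⟩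
        refine ⟨⟨1 + j₁, by omega, by congr 1; omega⟩, ⟨a (i + 0), ⟨0, by omega, rfl⟩, ?_⟩⟩
        rw [hltiff (i+0) (i+1+j₁) (by omega) (by omega)]
        omega
    have h1 : ∀ i, i ≤ j + 1 → c (win n a i) = γ.1 := by
      intro i hi
      have h' := congrArg Prod.fst (hγ i hi)
      simp only [hC] at h'
      rw [Finset.filter_congr_decidable] at h'
      rw [← h']
      have hcl := hcl1 i hi
      rw [Finset.filter_congr_decidable] at hcl
      exact (congrArg c hcl).symm
    have h2 : ∀ i, i ≤ j + 1 → c (win n a (i+1)) = γ.2 := by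
      intro i hi
      have h' := congrArg Prod.snd (hγ i hi)
      simp only [hC] at h'
      rw [Finset.filter_congr_decidable] at h'
      rw [← h']
      have hcl := hcl2 i hi
      rw [Finset.filter_congr_decidable] at hcl
      exact (congrArg c hcl).symm
    have h21 : γ.2 = γ.1 := by
      rw [← h2 0 (by omega)]
      exact h1 1 (by omega)
    refine ⟨a, ha', γ.1, ?_⟩
    intro i hi
    rcases Nat.lt_or_ge i (j+2) with h | h
    · exact h1 i (by omega)
    · have hij : i = (j+1) + 1 := by omega
      rw [hij, h2 (j+1) le_rfl, h21]

/-- the `(j+2)`-uniform shift hypergraph on `Finset V`. -/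
def Edges (j n : ℕ) (V : Type u) [LinearOrder V] : Set (Set (Finset V)) :=
  { e | ∃ a : ℕ → V, StrictMonoOn a (Set.Iio (n + j + 1 : ℕ)) ∧
      e = ↑((Finset.range (j + 2)).image fun i => win n a i) }

lemma win_card {V : Type u} [LinearOrder V] {j n : ℕ} {a : ℕ → V}
    (ha : StrictMonoOn a (Set.Iio (n + j + 1 : ℕ))) {i : ℕ} (hi : i ≤ j + 1) :
    (win n a i).card = n := by
  rw [win, Finset.card_image_of_injOn, Finset.card_range]
  intro s hs t ht hst
  simp only [Finset.coe_range, Set.mem_Iio] at hs ht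
  by_contra hne
  rcases Ne.lt_or_gt hne with h | h
  · exact absurd hst (ne_of_lt (ha (by simp only [Set.mem_Iio]; omega)
      (by simp only [Set.mem_Iio]; omega) (by omega)))
  · exact absurd hst.symm (ne_of_lt (ha (by simp only [Set.mem_Iio]; omega)
      (by simp only [Set.mem_Iio]; omega) (by omega)))

lemma win_ne {V : Type u} [LinearOrder V] {j n : ℕ} (hn : 1 ≤ n) {a : ℕ → V}
    (ha : StrictMonoOn a (Set.Iio (n + j + 1 : ℕ))) {i₁ i₂ : ℕ} (h12 : i₁ < i₂)
    (hi₂ : i₂ ≤ j + 1) : win n a i₁ ≠ win n a i₂ := by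
  intro heq
  have h1 : a i₁ ∈ win n a i₁ := mem_win.mpr ⟨0, by omega, by rw [Nat.add_zero]⟩
  rw [heq, mem_win] at h1
  obtain ⟨j', hj', hj'eq⟩ := h1
  have : a i₁ < a (i₂ + j') := ha (by simp only [Set.mem_Iio]; omega)
    (by simp only [Set.mem_Iio]; omega) (by omega)
  rw [hj'eq] at this
  exact lt_irrefl _ this

lemma mem_edge {V : Type u} [LinearOrder V] {j n : ℕ} {a : ℕ → V} {x : Finset V} :
    (x ∈ (↑((Finset.range (j + 2)).image fun i => win n a i) : Set (Finset V))
      ↔ ∃ i, i ≤ j + 1 ∧ win n a i = x) := by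
  simp only [Finset.coe_image, Set.mem_image, Finset.coe_range, Set.mem_Iio]
  constructor
  · rintro ⟨i, hi, rfl⟩; exact ⟨i, by omega, rfl⟩
  · rintro ⟨i, hi, rfl⟩; exact ⟨i, by omega, rfl⟩

lemma edges_uniform {V : Type u} [LinearOrder V] {j n : ℕ} (hn : 1 ≤ n) :
    ∀ e ∈ Edges j n V, e.ncard = j + 2 := by
  rintro e ⟨a, ha, rfl⟩
  rw [Set.ncard_coe_finset, Finset.card_image_of_injOn, Finset.card_range]
  intro s hs t ht hst
  simp only [Finset.coe_range, Set.mem_Iio] at hs ht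
  by_contra hne
  rcases Ne.lt_or_gt hne with h | h
  · exact win_ne hn ha h (by omega) hst
  · exact win_ne hn ha h (by omega) hst.symm

lemma high_chromatic (j n : ℕ) (hn : 1 ≤ n) (V : Type u) [LinearOrder V]
    (hV : expIter (n + j + 2) (ℵ₀ : Cardinal.{u}) < #V) :
    Cardinal.aleph 1 ≤ chromaticNumber (Finset V) (Edges j n V) := by
  apply le_csInf
  · refine ⟨#(Finset V), Finset V, id, rfl, ?_⟩
    rintro e ⟨a, ha, rfl⟩
    refine ⟨win n a 0, ?_, win n a 1, ?_, ?_⟩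
    · exact mem_edge.mpr ⟨0, by omega, rfl⟩
    · exact mem_edge.mpr ⟨1, by omega, rfl⟩
    · exact win_ne hn ha (by omega) (by omega)
  · rintro b ⟨α, f, rfl, hf⟩
    by_contra hb
    push_neg at hb
    have hα : #α ≤ ℵ₀ := by
      rwa [← Cardinal.succ_aleph0, Order.lt_succ_iff] at hb
    have hbound : expIter (n + j) (#α + ℵ₀) < #V := by
      refine lt_of_le_of_lt ?_ hV
      calc expIter (n + j) (#α + ℵ₀)
          ≤ expIter (n + j) ℵ₀ := expIter_mono _ (by
            calc #α + ℵ₀ ≤ ℵ₀ + ℵ₀ := add_le_add hα le_rfl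
            _ = ℵ₀ := Cardinal.aleph0_add_aleph0)
        _ ≤ expIter (n + j + 2) ℵ₀ := expIter_le_add _ 2 _
    obtain ⟨a, ha, γ, hγ⟩ := shiftk j n V α f hn hbound
    obtain ⟨x, hx, y, hy, hxy⟩ := hf _ ⟨a, ha, rfl⟩
    obtain ⟨i₁, hi₁, rfl⟩ := mem_edge.mp hx
    obtain ⟨i₂, hi₂, rfl⟩ := mem_edge.mp hy
    exact hxy ((hγ i₁ hi₁).trans (hγ i₂ hi₂).symm)

lemma partition (j n : ℕ) (hn : 1 ≤ n) {VF : Type} [Finite VF]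
    (EF : Set (Set VF)) (V : Type u) [LinearOrder V]
    (φ : VF → Finset V) (hinj : Function.Injective φ)
    (hmap : ∀ e ∈ EF, φ '' e ∈ Edges j n V)
    (hbig : Nat.card VF * Nat.card VF < n) :
    ∃ c : VF → Fin (j + 2), ∀ e ∈ EF, ∀ q : Fin (j + 2), (e ∩ c ⁻¹' {q}).ncard = 1 := by
  classical
  letI := Fintype.ofFinite VF
  rcases Set.eq_empty_or_nonempty EF with rfl | ⟨e₀, he₀⟩
  · exact ⟨fun _ => ⟨0, by omega⟩, fun e he => absurd he (Set.notMem_empty e)⟩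
  obtain ⟨a₀, -, -⟩ := hmap e₀ he₀
  haveI : Nonempty V := ⟨a₀ 0⟩
  set m := Nat.card VF with hm
  have hmf : m = Fintype.card VF := Nat.card_eq_fintype_card
  -- the step relation and associated graph
  set Rel : VF → VF → Prop := fun u v => ∃ a : ℕ → V, StrictMonoOn a (Set.Iio (n + j + 1 : ℕ)) ∧
      ∃ i, i + 1 ≤ j + 1 ∧ φ u = win n a i ∧ φ v = win n a (i + 1) with hRel
  set G : SimpleGraph VF :=
    { Adj := fun u v => u ≠ v ∧ (Rel u v ∨ Rel v u)
      symm := ⟨fun u v h => ⟨h.1.symm, h.2.symm⟩⟩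
      loopless := ⟨fun u h => h.1 rfl⟩ } with hG
  have hRel_diff : ∀ u v, Rel u v → (φ u \ φ v).card ≤ 1 ∧ (φ v \ φ u).card ≤ 1 := by
    rintro u v ⟨a, ha, i, hi, hu, hv⟩
    constructor
    · have hsub : φ u \ φ v ⊆ {a i} := by
        intro x hx
        rw [Finset.mem_sdiff, hu, hv] at hx
        obtain ⟨hx1, hx2⟩ := hx
        obtain ⟨t, ht, rfl⟩ := mem_win.mp hx1
        rcases Nat.eq_zero_or_pos t with rfl | ht1
        · simp only [Finset.mem_singleton]
          congr 1
        · exact absurd (mem_win.mpr ⟨t - 1, by omega, by congr 1; omega⟩) hx2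
      calc (φ u \ φ v).card ≤ ({a i} : Finset V).card := Finset.card_le_card hsub
      _ = 1 := Finset.card_singleton _
    · have hsub : φ v \ φ u ⊆ {a (i + n)} := by
        intro x hx
        rw [Finset.mem_sdiff, hu, hv] at hx
        obtain ⟨hx1, hx2⟩ := hx
        obtain ⟨t, ht, rfl⟩ := mem_win.mp hx1
        rcases Nat.lt_or_ge t (n - 1) with ht1 | ht1
        · exact absurd (mem_win.mpr ⟨t + 1, by omega, by congr 1; omega⟩) hx2
        · simp only [Finset.mem_singleton]
          congr 1
          omega
      calc (φ v \ φ u).card ≤ ({a (i + n)} : Finset V).card := Finset.card_le_card hsub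
      _ = 1 := Finset.card_singleton _
  have hAdj_diff : ∀ u v, G.Adj u v → (φ u \ φ v).card ≤ 1 := by
    rintro u v ⟨-, h | h⟩
    exacts [(hRel_diff u v h).1, (hRel_diff v u h).2]
  have hwalk : ∀ (u v : VF) (p : G.Walk u v), (φ u \ φ v).card ≤ p.length := by
    intro u v p
    induction p with
    | nil => simp
    | @cons u w v h q ih =>
      have hsub : φ u \ φ v ⊆ (φ u \ φ w) ∪ (φ w \ φ v) := by
        intro x hx
        rw [Finset.mem_sdiff] at hx
        rw [Finset.mem_union, Finset.mem_sdiff, Finset.mem_sdiff]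
        by_cases hw : x ∈ φ w
        · exact Or.inr ⟨hw, hx.2⟩
        · exact Or.inl ⟨hx.1, hw⟩
      calc (φ u \ φ v).card ≤ ((φ u \ φ w) ∪ (φ w \ φ v)).card := Finset.card_le_card hsub
      _ ≤ (φ u \ φ w).card + (φ w \ φ v).card := Finset.card_union_le _ _
      _ ≤ 1 + q.length := Nat.add_le_add (hAdj_diff u w h) ih
      _ ≤ (SimpleGraph.Walk.cons h q).length := by rw [SimpleGraph.Walk.length_cons]; omega
  have hreach : ∀ u v : VF, G.Reachable u v → (φ u \ φ v).card ≤ m - 1 := by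
    intro u v h
    obtain ⟨p⟩ := h
    have h1 := hwalk u v p.bypass
    have h2 : p.bypass.length < m := by
      rw [hmf]
      exact p.bypass_isPath.length_lt
    omega
  -- the common element of a connected component
  set T : VF → Finset V := fun u => (φ u).filter (fun x => ∀ v, G.Reachable u v → x ∈ φ v) with hT
  have hT_eq : ∀ u v, G.Reachable u v → T u = T v := by
    intro u v huv
    ext x
    simp only [hT, Finset.mem_filter]
    constructor
    · rintro ⟨hxu, hall⟩
      exact ⟨hall v huv, fun w hw => hall w (huv.trans hw)⟩
    · rintro ⟨hxv, hall⟩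
      exact ⟨hall u huv.symm, fun w hw => hall w (huv.symm.trans hw)⟩
  have hT_ne : ∀ u : VF, (φ u).card = n → (T u).Nonempty := by
    intro u hcard
    have hsub : φ u \ T u ⊆ (Finset.univ.filter (fun w => G.Reachable u w)).biUnion
        (fun w => φ u \ φ w) := by
      intro x hx
      rw [Finset.mem_sdiff] at hx
      obtain ⟨hxu, hxT⟩ := hx
      simp only [hT, Finset.mem_filter, not_and, not_forall] at hxT
      obtain ⟨w, hw, hxw⟩ := hxT hxu
      exact Finset.mem_biUnion.mpr ⟨w, Finset.mem_filter.mpr ⟨Finset.mem_univ _, hw⟩,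
        Finset.mem_sdiff.mpr ⟨hxu, hxw⟩⟩
    have hb : (φ u \ T u).card ≤ m * (m - 1) := by
      calc (φ u \ T u).card ≤ _ := Finset.card_le_card hsub
      _ ≤ (Finset.univ.filter (fun w => G.Reachable u w)).card * (m - 1) :=
          Finset.card_biUnion_le_card_mul _ _ _
            (fun w hw => hreach u w (Finset.mem_filter.mp hw).2)
      _ ≤ m * (m - 1) := Nat.mul_le_mul_right _
            (by rw [hmf]; exact (Finset.card_filter_le _ _).trans (by simp))
    have hTsub : T u ⊆ φ u := Finset.filter_subset _ _
    have hc2 : (φ u \ T u).card + (T u).card = (φ u).card :=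
      Finset.card_sdiff_add_card_eq_card hTsub
    have hmm : m * (m - 1) ≤ m * m := Nat.mul_le_mul_left _ (by omega)
    rw [← Finset.card_pos]
    omega
  set estar : VF → V := fun u =>
    if h : (T u).Nonempty then (T u).min' h else Classical.arbitrary V with hestar
  have hestar_eq : ∀ u v, G.Reachable u v → estar u = estar v := by
    intro u v h
    have hTuv := hT_eq u v h
    simp only [hestar, hTuv]
  have hestar_mem : ∀ u, (T u).Nonempty → ∀ v, G.Reachable u v → estar u ∈ φ v := by
    intro u hne v h
    have hmem : estar u ∈ T u := by
      simp only [hestar, dif_pos hne]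
      exact (T u).min'_mem hne
    rw [hT, Finset.mem_filter] at hmem
    exact hmem.2 v h
  set rk : Finset V → V → ℕ := fun s x => (s.filter (fun z => z < x)).card with hrkdef
  set c : VF → Fin (j + 2) := fun v => ⟨rk (φ v) (estar v) % (j + 2), Nat.mod_lt _ (by omega)⟩
    with hc
  refine ⟨c, ?_⟩
  intro e he q
  obtain ⟨a, ha, heq⟩ := hmap e he
  have hainj : ∀ s t : ℕ, s < n + j + 1 → t < n + j + 1 → a s = a t → s = t := by
    intro s t hs ht hst
    by_contra hne
    rcases Ne.lt_or_gt hne with h | h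
    · exact absurd hst (ne_of_lt (ha (by simp only [Set.mem_Iio]; omega)
        (by simp only [Set.mem_Iio]; omega) h))
    · exact absurd hst.symm (ne_of_lt (ha (by simp only [Set.mem_Iio]; omega)
        (by simp only [Set.mem_Iio]; omega) h))
  have hidx : ∀ v ∈ e, ∃ i, i ≤ j + 1 ∧ φ v = win n a i := by
    intro v hv
    have hmem : φ v ∈ φ '' e := ⟨v, hv, rfl⟩
    rw [heq] at hmem
    obtain ⟨i, hi, hwin⟩ := mem_edge.mp hmem
    exact ⟨i, hi, hwin.symm⟩
  have hvtx : ∀ i, i ≤ j + 1 → ∃ v, v ∈ e ∧ φ v = win n a i := by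
    intro i hi
    have hmem : win n a i ∈ φ '' e := by rw [heq]; exact mem_edge.mpr ⟨i, hi, rfl⟩
    obtain ⟨v, hv, hphi⟩ := hmem
    exact ⟨v, hv, hphi⟩
  have hadj : ∀ i, i + 1 ≤ j + 1 → ∀ v w, φ v = win n a i → φ w = win n a (i + 1) →
      G.Adj v w := by
    intro i hi v w hpv hpw
    refine ⟨?_, Or.inl ⟨a, ha, i, hi, hpv, hpw⟩⟩
    intro hvw
    have heq2 : win n a i = win n a (i + 1) := by rw [← hpv, hvw, hpw]
    exact win_ne hn ha (by omega) hi heq2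
  obtain ⟨v₀, hv₀e, hv₀⟩ := hvtx 0 (by omega)
  have hreach_e : ∀ i, i ≤ j + 1 → ∀ w, φ w = win n a i → G.Reachable v₀ w := by
    intro i
    induction i with
    | zero =>
      intro _ w hpw
      have hvw : v₀ = w := hinj (hv₀.trans hpw.symm)
      rw [← hvw]
    | succ i ih =>
      intro hi w hpw
      obtain ⟨w', hw'e, hpw'⟩ := hvtx i (by omega)
      exact (ih (by omega) w' hpw').trans
        (SimpleGraph.Adj.reachable (hadj i hi w' w hpw' hpw))
  have hcard0 : (φ v₀).card = n := by rw [hv₀]; exact win_card ha (by omega)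
  have hT0 : (T v₀).Nonempty := hT_ne v₀ hcard0
  set ε := estar v₀ with hεdef
  have hεmem : ∀ w ∈ e, ε ∈ φ w := by
    intro w hw
    obtain ⟨i, hi, hpw⟩ := hidx w hw
    exact hestar_mem v₀ hT0 w (hreach_e i hi w hpw)
  have hεconst : ∀ w ∈ e, estar w = ε := by
    intro w hw
    obtain ⟨i, hi, hpw⟩ := hidx w hw
    exact (hestar_eq v₀ w (hreach_e i hi w hpw)).symm
  have hε0 : ε ∈ win n a 0 := by rw [← hv₀]; exact hεmem v₀ hv₀e
  obtain ⟨j₀, hj₀n, hj₀⟩ := mem_win.mp hε0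
  obtain ⟨vlast, hvlaste, hvlast⟩ := hvtx (j + 1) le_rfl
  have hεlast : ε ∈ win n a (j + 1) := by rw [← hvlast]; exact hεmem vlast hvlaste
  obtain ⟨j₁, hj₁n, hj₁⟩ := mem_win.mp hεlast
  have hj₀big : j + 1 ≤ j₀ := by
    have hinj2 := hainj (0 + j₀) (j + 1 + j₁) (by omega) (by omega) (by rw [hj₀, hj₁])
    omega
  have hrk : ∀ i, i ≤ j + 1 → rk (win n a i) ε = j₀ - i := by
    intro i hi
    have hseteq : (win n a i).filter (fun z => z < ε)
        = (Finset.range (j₀ - i)).image (fun t => a (i + t)) := by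
      ext x
      simp only [Finset.mem_filter, mem_win, Finset.mem_image, Finset.mem_range]
      constructor
      · rintro ⟨⟨t, ht, rfl⟩, hlt⟩
        have h1 : a (i + t) < a (0 + j₀) := by rw [hj₀]; exact hlt
        have h2 : i + t < 0 + j₀ := by
          by_contra hge
          push_neg at hge
          rcases Nat.lt_or_ge (0 + j₀) (i + t) with hgt | hge2
          · exact absurd (ha (by simp only [Set.mem_Iio]; omega)
              (by simp only [Set.mem_Iio]; omega) hgt) (asymm h1)
          · have hee : i + t = 0 + j₀ := by omega
            rw [hee] at h1
            exact lt_irrefl _ h1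
        exact ⟨t, by omega, rfl⟩
      · rintro ⟨t, ht, rfl⟩
        refine ⟨⟨t, by omega, rfl⟩, ?_⟩
        rw [← hj₀]
        exact ha (by simp only [Set.mem_Iio]; omega) (by simp only [Set.mem_Iio]; omega)
          (by omega)
    simp only [hrkdef]
    rw [hseteq, Finset.card_image_of_injOn, Finset.card_range]
    intro s hs t ht hst
    simp only [Finset.coe_range, Set.mem_Iio] at hs ht
    have := hainj (i + s) (i + t) (by omega) (by omega) hst
    omega
  have hcv : ∀ w ∈ e, ∀ i, i ≤ j + 1 → φ w = win n a i →
      (c w : ℕ) = (j₀ - i) % (j + 2) := by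
    intro w hw i hi hpw
    simp only [hc]
    rw [hεconst w hw, hpw, hrk i hi]
  have hmodinj : ∀ i₁ i₂, i₁ ≤ j + 1 → i₂ ≤ j + 1 →
      (j₀ - i₁) % (j + 2) = (j₀ - i₂) % (j + 2) → i₁ = i₂ := by
    have key : ∀ x y : ℕ, x ≤ y → y - x < j + 2 → x % (j + 2) = y % (j + 2) → x = y := by
      intro x y hxy hlt hm2
      have hdvd : (j + 2) ∣ (y - x) := (Nat.modEq_iff_dvd' hxy).mp hm2
      have := Nat.eq_zero_of_dvd_of_lt hdvd hlt
      omega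
    intro i₁ i₂ h1 h2 hmod
    rcases le_total (j₀ - i₁) (j₀ - i₂) with h | h
    · have := key _ _ h (by omega) hmod
      omega
    · have := key _ _ h (by omega) hmod.symm
      omega
  have hsurj : ∃ i, i ≤ j + 1 ∧ (j₀ - i) % (j + 2) = (q : ℕ) := by
    have hginj : Function.Injective
        (fun i : Fin (j + 2) => (⟨(j₀ - (i : ℕ)) % (j + 2), Nat.mod_lt _ (by omega)⟩ : Fin (j + 2))) := by
      intro i₁ i₂ hgi
      exact Fin.ext (hmodinj i₁ i₂ (by omega) (by omega) (congrArg Fin.val hgi))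
    obtain ⟨i, hi⟩ := Finite.injective_iff_surjective.mp hginj q
    exact ⟨i, by omega, congrArg Fin.val hi⟩
  obtain ⟨i_q, hi_q, hmod_q⟩ := hsurj
  obtain ⟨vq, hvqe, hvq⟩ := hvtx i_q hi_q
  have hset : e ∩ c ⁻¹' {q} = {vq} := by
    apply Set.eq_singleton_iff_unique_mem.mpr
    constructor
    · refine ⟨hvqe, ?_⟩
      simp only [Set.mem_preimage, Set.mem_singleton_iff]
      apply Fin.ext
      rw [hcv vq hvqe i_q hi_q hvq, hmod_q]
    · rintro w ⟨hwe, hwq⟩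
      obtain ⟨i', hi', hpw⟩ := hidx w hwe
      have h1 : (c w : ℕ) = (j₀ - i') % (j + 2) := hcv w hwe i' hi' hpw
      have h2 : (c w : ℕ) = (q : ℕ) := by
        rw [Set.mem_preimage, Set.mem_singleton_iff] at hwq
        rw [hwq]
      have hii : i' = i_q := hmodinj i' i_q hi' hi_q (by rw [← h1, h2, hmod_q])
      apply hinj
      rw [hpw, hii, hvq]
  rw [hset, Set.ncard_singleton]

end ObligAux

/-- Every obligatory finite `k`-uniform hypergraph is `k`-partite: its vertex set can
be partitioned into `k` classes (colour classes of some `c : VF → Fin k`) such that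
every edge meets each class in exactly one vertex. -/
theorem obligatory_is_kpartite (k : ℕ) (hk : 2 ≤ k)
    {VF : Type} [Finite VF] (EF : Set (Set VF)) (hUnif : ∀ e ∈ EF, e.ncard = k)
    (hObl : Obligatory.{u} k EF) :
    ∃ c : VF → Fin k, ∀ e ∈ EF, ∀ j : Fin k, (e ∩ c ⁻¹' {j}).ncard = 1 := by
  obtain ⟨j, rfl⟩ : ∃ j, k = j + 2 := ⟨k - 2, by omega⟩
  set n := Nat.card VF * Nat.card VF + 1 with hn
  have hn1 : 1 ≤ n := by omega
  set μ := Order.succ (ObligAux.expIter (n + j + 2) (ℵ₀ : Cardinal.{u})) with hμ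
  set V := μ.ord.ToType with hV
  have hVcard : ObligAux.expIter (n + j + 2) (ℵ₀ : Cardinal.{u}) < #V := by
    rw [hV, Cardinal.mk_ord_toType]
    exact Order.lt_succ _
  have hchrom := ObligAux.high_chromatic j n hn1 V hVcard
  obtain ⟨φ, hinj, hmap⟩ := hObl (Finset V) (ObligAux.Edges j n V)
    (ObligAux.edges_uniform hn1) hchrom
  exact ObligAux.partition j n hn1 EF V φ hinj hmap (by omega)
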